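/- The global function f_X of the sand automaton X is F-injective: any two distinct finite configurations have distinct images under f_X. -/

import Mathlib

/-- The extended integers `ℤ ∪ {-∞, +∞}`. -/
abbrev EZ : Type := WithBot (WithTop ℤ)

/-- Embedding of `ℤ` into the extended integers. -/
def finVal (n : ℤ) : EZ := ((n : WithTop ℤ) : EZ)

/-- The integer value of a finite extended integer (`0` on `±∞`). -/
def valZ (x : EZ) : ℤ := WithBot.recBotCoe 0 (fun y => WithTop.recTopCoe 0 id y) x

/-- The measuring device `β_l^m`. -/
noncomputable def beta (l : ℕ) (m : ℤ) (n : EZ) : EZ :=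
  if finVal (m + (l : ℤ)) < n then ⊤
  else if n < finVal (m - (l : ℤ)) then ⊥
  else WithBot.map (WithTop.map (fun k => k - m)) n

/-- Reference height: the value of `x` if finite, `0` if `x = ±∞`. -/
def refH (x : EZ) : ℤ := if x = ⊥ ∨ x = ⊤ then 0 else valZ x

/-- One-dimensional sandpile configurations. -/
abbrev Config : Type := ℤ → EZ

/-- The neighborhood sequence `d_r^i(c)`: the `2r`-tuple of measured differences. -/
noncomputable def nbhd (r : ℕ) (c : Config) (i : ℤ) : Fin (2 * r) → EZ :=
  fun j => beta r (refH (c i))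
    (c (i + (if (j : ℕ) < r then ((j : ℕ) : ℤ) - (r : ℤ) else ((j : ℕ) : ℤ) - (r : ℤ) + 1)))

/-- The global function of the sand automaton of radius `r` with local rule `lam`. -/
noncomputable def globalF (r : ℕ) (lam : (Fin (2 * r) → EZ) → ℤ) (c : Config) : Config :=
  fun i => if c i = ⊥ ∨ c i = ⊤ then c i
    else finVal (valZ (c i) + lam (nbhd r c i))

/-- Finite configurations. -/
def FiniteConf (c : Config) : Prop := ∃ k : ℕ, ∀ i : ℤ, (k : ℤ) ≤ |i| → c i = finVal 0

/-- Periodic configurations. -/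
def PeriodicConf (c : Config) : Prop := ∃ p : ℤ, p ≠ 0 ∧ ∀ i : ℤ, c (i + p) = c i


/-- The local rule of the sand automaton `X` (radius 2, arguments `(a,b,x,y)`):
returns `-1` on `(+∞,-,-,-)`, `(2,-,-,-)`, `(1,-1,-,-)`, `(1,-2,-,-)`, `(1,-∞,-,-)`,
`(0,-2,-,-)`, `(0,-∞,-,-)`, and `0` otherwise. -/
def lamX (v : Fin 4 → EZ) : ℤ :=
  if v 0 = ⊤ ∨ v 0 = finVal 2 then -1
  else if v 0 = finVal 1 ∧ (v 1 = finVal (-1) ∨ v 1 = finVal (-2) ∨ v 1 = ⊥) then -1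
  else if v 0 = finVal 0 ∧ (v 1 = finVal (-2) ∨ v 1 = ⊥) then -1
  else 0


lemma finVal_inj {a b : ℤ} : finVal a = finVal b ↔ a = b := by simp [finVal]
lemma finVal_ne_bot (a : ℤ) : finVal a ≠ ⊥ := by simp [finVal]
lemma finVal_ne_top (a : ℤ) : finVal a ≠ ⊤ := by
  show ((a : WithTop ℤ) : EZ) ≠ ((⊤ : WithTop ℤ) : EZ)
  simp
lemma finVal_lt {a b : ℤ} : finVal a < finVal b ↔ a < b := by simp [finVal]
lemma finVal_lt_top (m : ℤ) : finVal m < ⊤ := by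
  show ((m : WithTop ℤ) : EZ) < ((⊤ : WithTop ℤ) : EZ)
  rw [WithBot.coe_lt_coe]; exact WithTop.coe_lt_top m
lemma beta_bot (m : ℤ) : beta 2 m ⊥ = ⊥ := by simp [beta, finVal]
lemma beta_top (m : ℤ) : beta 2 m ⊤ = ⊤ := by simp [beta, finVal_lt_top]
lemma map_finVal (m A : ℤ) :
    WithBot.map (WithTop.map (fun k => k - m)) (finVal A) = finVal (A - m) := rfl
lemma beta_fin (m A : ℤ) : beta 2 m (finVal A) =
    if m + 2 < A then ⊤ else if A < m - 2 then ⊥ else finVal (A - m) := by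
  simp only [beta, map_finVal, finVal_lt]
  norm_num

lemma top_ne_finVal (a : ℤ) : (⊤:EZ) ≠ finVal a := (finVal_ne_top a).symm
lemma bot_ne_finVal (a : ℤ) : (⊥:EZ) ≠ finVal a := (finVal_ne_bot a).symm
lemma ez_bot_ne_top : (⊥:EZ) ≠ ⊤ := by
  show (⊥:EZ) ≠ ((⊤ : WithTop ℤ) : EZ); simp
lemma ez_top_ne_bot : (⊤:EZ) ≠ ⊥ := ez_bot_ne_top.symm

lemma beta_fin_eq_top {m A : ℤ} : beta 2 m (finVal A) = ⊤ ↔ m + 2 < A := by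
  rw [beta_fin]; split_ifs <;>
    simp_all [finVal_ne_top, ez_bot_ne_top]
lemma beta_fin_eq_bot {m A : ℤ} : beta 2 m (finVal A) = ⊥ ↔ A < m - 2 := by
  rw [beta_fin]; split_ifs <;>
    simp_all [finVal_ne_bot, ez_top_ne_bot] <;> omega
lemma beta_fin_eq_fin {m A k : ℤ} :
    beta 2 m (finVal A) = finVal k ↔ A ≤ m + 2 ∧ m - 2 ≤ A ∧ A - m = k := by
  rw [beta_fin]; split_ifs <;>
    simp_all [finVal_inj, top_ne_finVal, bot_ne_finVal] <;> omega

/-- The decrement value as a function of the left two neighbours and the height. -/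
noncomputable def Dfun (a b : EZ) (n : ℤ) : ℤ :=
  if beta 2 n a = ⊤ ∨ beta 2 n a = finVal 2 then -1
  else if beta 2 n a = finVal 1 ∧
      (beta 2 n b = finVal (-1) ∨ beta 2 n b = finVal (-2) ∨ beta 2 n b = ⊥) then -1
  else if beta 2 n a = finVal 0 ∧ (beta 2 n b = finVal (-2) ∨ beta 2 n b = ⊥) then -1
  else 0

lemma Dfun_mono (a b : EZ) (n : ℤ) : Dfun a b n ≤ Dfun a b (n + 1) := by
  induction a using WithBot.recBotCoe with
  | bot =>
    simp [Dfun, beta_bot, ez_bot_ne_top, bot_ne_finVal]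
  | coe a =>
    induction a using WithTop.recTopCoe with
    | top =>
      have h : ((⊤ : WithTop ℤ) : EZ) = ⊤ := rfl
      simp [Dfun, h, beta_top]
    | coe A =>
      have hA : ((A : WithTop ℤ) : EZ) = finVal A := rfl
      rw [hA]
      induction b using WithBot.recBotCoe with
      | bot =>
        simp only [Dfun, beta_bot, beta_fin_eq_top, beta_fin_eq_fin,
          bot_ne_finVal, ez_bot_ne_top, eq_self_iff_true, or_true, true_or,
          and_true, true_and, or_false, false_or, and_false, false_and]
        split_ifs <;> omega
      | coe b =>
        induction b using WithTop.recTopCoe with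
        | top =>
          have h : ((⊤ : WithTop ℤ) : EZ) = ⊤ := rfl
          rw [h]
          simp only [Dfun, beta_top, beta_fin_eq_top, beta_fin_eq_fin,
            top_ne_finVal, ez_top_ne_bot, eq_self_iff_true, or_true, true_or,
            and_true, true_and, or_false, false_or, and_false, false_and]
          split_ifs <;> omega
        | coe B =>
          have hB : ((B : WithTop ℤ) : EZ) = finVal B := rfl
          rw [hB]
          simp only [Dfun, beta_fin_eq_top, beta_fin_eq_fin, beta_fin_eq_bot]
          split_ifs <;> omega

lemma Dfun_inj (a b : EZ) : Function.Injective (fun n : ℤ => n + Dfun a b n) :=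
  (strictMono_int_of_lt_succ (fun n => by have := Dfun_mono a b n; omega)).injective

lemma valZ_finVal (n : ℤ) : valZ (finVal n) = n := rfl

lemma finVal_valZ {x : EZ} (h : ¬(x = ⊥ ∨ x = ⊤)) : finVal (valZ x) = x := by
  push_neg at h
  induction x using WithBot.recBotCoe with
  | bot => exact absurd rfl h.1
  | coe y =>
    induction y using WithTop.recTopCoe with
    | top => exact absurd rfl h.2
    | coe n => rfl

lemma lamX_nbhd (c : Config) (i : ℤ) :
    lamX (nbhd 2 c i) = Dfun (c (i - 2)) (c (i - 1)) (refH (c i)) := by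
  have e0 : i + ((0:ℤ) - 2) = i - 2 := by ring
  have e1 : i + ((1:ℤ) - 2) = i - 1 := by ring
  have e0' : i + (-2:ℤ) = i - 2 := by ring
  have e1' : i + (-1:ℤ) = i - 1 := by ring
  simp only [lamX, Dfun, nbhd]
  norm_num [e0, e1, e0', e1']

/-- `f_X` is `F`-injective: any two distinct finite configurations have distinct
images under `f_X`. -/
theorem X_F_injective :
    Set.InjOn (globalF 2 lamX) {c : Config | FiniteConf c} := by
  intro c hc c' hc' hfe
  obtain ⟨k, hk⟩ := hc
  obtain ⟨k', hk'⟩ := hc'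
  set K : ℕ := max k k' with hKdef
  have base : ∀ i : ℤ, i ≤ -(K : ℤ) → c i = c' i := by
    intro i hi
    have hKk : (k : ℤ) ≤ K := by exact_mod_cast le_max_left k k'
    have hKk' : (k' : ℤ) ≤ K := by exact_mod_cast le_max_right k k'
    have habs : -i ≤ |i| := neg_le_abs i
    rw [hk i (by omega), hk' i (by omega)]
  have step : ∀ n : ℕ, ∀ i : ℤ, i ≤ -(K : ℤ) + n → c i = c' i := by
    intro n
    induction n with
    | zero => intro i hi; exact base i (by omega)
    | succ n ih =>
      intro i hi
      by_cases hi' : i ≤ -(K : ℤ) + n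
      · exact ih i hi'
      · have ha : c (i - 2) = c' (i - 2) := ih _ (by push_cast at hi ⊢; omega)
        have hb : c (i - 1) = c' (i - 1) := ih _ (by push_cast at hi ⊢; omega)
        have hfi : globalF 2 lamX c i = globalF 2 lamX c' i := congrFun hfe i
        simp only [globalF] at hfi
        by_cases h1 : c i = ⊥ ∨ c i = ⊤ <;> by_cases h2 : c' i = ⊥ ∨ c' i = ⊤
        · rw [if_pos h1, if_pos h2] at hfi; exact hfi
        · rw [if_pos h1, if_neg h2] at hfi
          rcases h1 with h | h <;> rw [h] at hfi
          · exact absurd hfi.symm (finVal_ne_bot _)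
          · exact absurd hfi.symm (finVal_ne_top _)
        · rw [if_neg h1, if_pos h2] at hfi
          rcases h2 with h | h <;> rw [h] at hfi
          · exact absurd hfi (finVal_ne_bot _)
          · exact absurd hfi (finVal_ne_top _)
        · rw [if_neg h1, if_neg h2] at hfi
          have hfi' : valZ (c i) + lamX (nbhd 2 c i) =
              valZ (c' i) + lamX (nbhd 2 c' i) := finVal_inj.mp hfi
          have hr1 : refH (c i) = valZ (c i) := by simp [refH, h1]
          have hr2 : refH (c' i) = valZ (c' i) := by simp [refH, h2]
          rw [lamX_nbhd, lamX_nbhd, hr1, hr2, ha, hb] at hfi'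
          have hval : valZ (c i) = valZ (c' i) :=
            Dfun_inj (c' (i - 2)) (c' (i - 1)) hfi'
          rw [← finVal_valZ h1, ← finVal_valZ h2, hval]
  funext i
  have hex : i ≤ -(K : ℤ) + (i + K).toNat := by
    have := Int.self_le_toNat (i + K)
    omega
  exact step (i + K).toNat i hex
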